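/- Let M be a compact metric space, φ: M → M continuous, and {G_n} a sequence of bounded Borel functions on M which is weakly almost additive: there is a sequence {C_m} ⊂ ℝ with C_n/n → 0 such that −C_m + G_m + G_n∘φ^m ≤ G_{m+n} ≤ C_m + G_m + G_n∘φ^m for all m, n ≥ 1. Then lim_{k→∞} limsup_{n→∞} (1/n) ‖G_n − (1/k) S_n G_k‖_∞ = 0, where S_nV = Σ_{j=0}^{n−1} V∘φ^j. -/

import Mathlib

open MeasureTheory Filter Topology Set
open scoped ENNReal

variable {M : Type*} [MetricSpace M] [CompactSpace M] [MeasurableSpace M] [BorelSpace M]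

/-- Birkhoff sum `S_n V = ∑_{j<n} V ∘ φ^j`. -/
noncomputable def birkhoff (φ : M → M) (V : M → ℝ) (n : ℕ) (x : M) : ℝ :=
  ∑ j ∈ Finset.range n, V (φ^[j] x)

/-- Supremum norm `‖f‖_∞` valued in `ℝ≥0∞`. -/
noncomputable def supNorm (f : M → ℝ) : ℝ≥0∞ :=
  ⨆ x : M, ENNReal.ofReal |f x|

/-- `Gk` is an approximating sequence for `G`:
`lim_{k→∞} limsup_{n→∞} (1/n) ‖G_n − S_n G^{(k)}‖_∞ = 0`. -/
def ApproxSeq (φ : M → M) (G : ℕ → M → ℝ) (Gk : ℕ → M → ℝ) : Prop :=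
  Tendsto
    (fun k => Filter.limsup
      (fun n => supNorm (fun x => G n x - birkhoff φ (Gk k) n x) / (n : ℝ≥0∞)) atTop)
    atTop (nhds 0)

/-- `G = {G_n}` is an asymptotically additive sequence of bounded Borel functions. -/
def AsympAdd (φ : M → M) (G : ℕ → M → ℝ) : Prop :=
  (∀ n, Measurable (G n) ∧ ∃ C : ℝ, ∀ x, |G n x| ≤ C) ∧
  ∃ Gk : ℕ → M → ℝ, (∀ k, Continuous (Gk k)) ∧ ApproxSeq φ G Gk

/-- Bowen ball `B_n(x, ε)`. -/
def bowenBall (φ : M → M) (n : ℕ) (x : M) (ε : ℝ) : Set M :=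
  {y | ∀ k < n, dist (φ^[k] y) (φ^[k] x) < ε}

/-- `E` is `(ε,n)`-spanning. -/
def IsSpanning (φ : M → M) (n : ℕ) (ε : ℝ) (E : Finset M) : Prop :=
  ∀ x : M, ∃ y ∈ E, x ∈ bowenBall φ n y ε

/-- `E` is `(ε,n)`-separated. -/
def IsSeparated (φ : M → M) (n : ℕ) (ε : ℝ) (E : Finset M) : Prop :=
  ∀ x ∈ E, ∀ y ∈ E, x ≠ y → x ∉ bowenBall φ n y ε

/-- `S(G,ε,n)`. -/
noncomputable def spanSum (φ : M → M) (G : ℕ → M → ℝ) (ε : ℝ) (n : ℕ) : ℝ≥0∞ :=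
  ⨅ (E : Finset M) (_ : IsSpanning φ n ε E), ∑ x ∈ E, ENNReal.ofReal (Real.exp (G n x))

/-- `N(G,ε,n)`. -/
noncomputable def sepSum (φ : M → M) (G : ℕ → M → ℝ) (ε : ℝ) (n : ℕ) : ℝ≥0∞ :=
  ⨆ (E : Finset M) (_ : IsSeparated φ n ε E), ∑ x ∈ E, ENNReal.ofReal (Real.exp (G n x))

/-- Topological pressure of an asymptotically additive sequence, via `(ε,n)`-separated sets. -/
noncomputable def pressure (φ : M → M) (G : ℕ → M → ℝ) : EReal :=
  ⨆ (ε : ℝ) (_ : 0 < ε),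
    Filter.limsup (fun n : ℕ => (((n : ℝ)⁻¹ : ℝ) : EReal) * ENNReal.log (sepSum φ G ε n)) atTop

/-- Entropy of the partition of `M` induced by a map into a finite type. -/
noncomputable def mapEntropy (μ : Measure M) {α : Type} [Fintype α] (c : M → α) : ℝ :=
  ∑ a : α, Real.negMulLog ((μ (c ⁻¹' {a})).toReal)

/-- Kolmogorov–Sinai entropy of `φ` along a finite partition `P` (encoded as `P : M → Fin m`). -/
noncomputable def partKS (φ : M → M) (μ : Measure M) {m : ℕ} (P : M → Fin m) : ℝ :=
  ⨅ n : ℕ, ((n : ℝ) + 1)⁻¹ *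
    mapEntropy μ (fun x => fun i : Fin (n + 1) => P (φ^[(i : ℕ)] x))

/-- Kolmogorov–Sinai entropy `h_φ(μ)`. -/
noncomputable def ksEntropy (φ : M → M) (μ : Measure M) : ℝ≥0∞ :=
  ⨆ (m : ℕ) (P : M → Fin m) (_ : Measurable P), ENNReal.ofReal (partKS φ μ P)

/-- Set of `n`-periodic points of `φ`. -/
def perSet (φ : M → M) (n : ℕ) : Set M := {x | φ^[n] x = x}

/-- `Z_n(G) = ∑_{x ∈ M_n} e^{G_n(x)}`, as an extended nonnegative real. -/
noncomputable def perPartition (φ : M → M) (G : ℕ → M → ℝ) (n : ℕ) : ℝ≥0∞ :=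
  ∑' x : perSet φ n, ENNReal.ofReal (Real.exp (G n x))

/-- The periodic-orbit measure `P_n = Z_n⁻¹ ∑_{x ∈ M_n} e^{G_n(x)} δ_x`. -/
noncomputable def perGibbs (φ : M → M) (G : ℕ → M → ℝ) (n : ℕ) : Measure M :=
  (perPartition φ G n)⁻¹ •
    Measure.sum (fun x : perSet φ n => ENNReal.ofReal (Real.exp (G n x)) • Measure.dirac (x : M))

/-- Weak periodic specification property. -/
def WPS (φ : M → M) : Prop :=
  ∃ m : ℝ → ℕ → ℕ, ∃ N : ℝ → ℕ,
    (∀ δ : ℝ, 0 < δ → ∀ n, N δ ≤ n → m δ n < n) ∧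
    (∀ δ : ℝ, 0 < δ → ∀ n, N δ ≤ n → ∀ x : M,
      ∃ y ∈ perSet φ n, y ∈ bowenBall φ (n - m δ n) x δ) ∧
    Tendsto (fun δ : ℝ => Filter.limsup (fun n => (m δ n : ℝ≥0∞) / (n : ℝ≥0∞)) atTop)
      (𝓝[>] (0 : ℝ)) (nhds 0)

/-- Specification property (S). -/
def SpecProp (φ : M → M) : Prop :=
  ∀ δ : ℝ, 0 < δ → ∃ N : ℕ, ∀ (r : ℕ) (a b : Fin r → ℕ) (pts : Fin r → M),
    (∀ i, a i ≤ b i) →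
    (∀ i j, i ≠ j → ∀ k, a i ≤ k → k ≤ b i → ∀ l, a j ≤ l → l ≤ b j → N ≤ Nat.dist k l) →
    ∃ x : M, ∀ i, ∀ k, a i ≤ k → k ≤ b i → dist (φ^[k] x) (φ^[k] (pts i)) < δ

/-- Condition (PAP): finitely many periodic points and periodic approximation of pressure. -/
def PAP (φ : M → M) : Prop :=
  (∀ n : ℕ, 0 < n → (perSet φ n).Finite) ∧
  ∀ G : ℕ → M → ℝ, AsympAdd φ G →
    Tendsto (fun n : ℕ => (((n : ℝ)⁻¹ : ℝ) : EReal) * ENNReal.log (perPartition φ G n)) atTop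
      (nhds (pressure φ G))

/-- Condition (USCE): finite topological entropy and upper semicontinuous entropy map. -/
def USCE (φ : M → M) : Prop :=
  pressure φ (fun _ _ => (0 : ℝ)) ≠ ⊤ ∧
  UpperSemicontinuousOn (fun μ : ProbabilityMeasure M => ksEntropy φ (μ : Measure M))
    {μ : ProbabilityMeasure M | (μ : Measure M).map φ = (μ : Measure M)}

/-- Empirical measure `μ_n^x`. -/
noncomputable def empMeas (φ : M → M) (n : ℕ) (x : M) : Measure M :=
  ((n : ℝ≥0∞))⁻¹ • ∑ i ∈ Finset.range n, Measure.dirac (φ^[i] x)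

/-- Weak Gibbs property of `P` for `G`, with (finite, real) pressure `p`. -/
def WeakGibbs (φ : M → M) (G : ℕ → M → ℝ) (p : ℝ) (P : Measure M) : Prop :=
  ∃ K : ℕ → ℝ → ℝ,
    (∀ n : ℕ, ∀ ε : ℝ, 0 < ε → 1 ≤ K n ε) ∧
    (∀ n : ℕ, 0 < n → ∀ ε : ℝ, 0 < ε → ∀ x : M,
      ENNReal.ofReal (Real.exp (G n x - n * p)) / ENNReal.ofReal (K n ε)
          ≤ P (bowenBall φ n x ε) ∧
      P (bowenBall φ n x ε)
          ≤ ENNReal.ofReal (K n ε) * ENNReal.ofReal (Real.exp (G n x - n * p))) ∧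
    Tendsto (fun ε : ℝ => Filter.limsup (fun n => ENNReal.ofReal (Real.log (K n ε) / n)) atTop)
      (𝓝[>] (0 : ℝ)) (nhds 0)

/-- **Weakly almost additive sequences are approximated by Birkhoff sums of their own
normalized terms (Lemma 6.2):** if `{G_n}` is weakly almost additive, then
`lim_{k→∞} limsup_{n→∞} (1/n) ‖G_n − (1/k) S_n G_k‖_∞ = 0`. -/
private lemma sumRangeMulAux (f : ℕ → ℝ) (k : ℕ) : ∀ l : ℕ,
    ∑ t ∈ Finset.range (l * k), f t
      = ∑ i ∈ Finset.range l, ∑ j ∈ Finset.range k, f (i * k + j)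
  | 0 => by simp
  | l + 1 => by
    rw [Finset.sum_range_succ, ← sumRangeMulAux f k l, Nat.succ_mul, Finset.sum_range_add]

theorem weaklyAlmostAdditive_approx
    {M : Type*} [MetricSpace M] [CompactSpace M] [MeasurableSpace M] [BorelSpace M]
    (φ : M → M) (hφ : Continuous φ)
    (G : ℕ → M → ℝ) (hGmeas : ∀ n, Measurable (G n))
    (hGbdd : ∀ n, ∃ C : ℝ, ∀ x, |G n x| ≤ C)
    (C : ℕ → ℝ) (hC : Tendsto (fun n : ℕ => C n / n) atTop (nhds 0))
    (hWAA : ∀ m n : ℕ, 1 ≤ m → 1 ≤ n → ∀ x : M,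
      -C m + G m x + G n (φ^[m] x) ≤ G (m + n) x ∧
      G (m + n) x ≤ C m + G m x + G n (φ^[m] x)) :
    Tendsto
      (fun k : ℕ => Filter.limsup
        (fun n : ℕ =>
          supNorm (fun x => G n x - (k : ℝ)⁻¹ * birkhoff φ (G k) n x) / (n : ℝ≥0∞)) atTop)
      atTop (nhds 0) := by
  rcases isEmpty_or_nonempty M with hM | hM
  · have hz : (fun k : ℕ => Filter.limsup
        (fun n : ℕ =>
          supNorm (fun x => G n x - (k : ℝ)⁻¹ * birkhoff φ (G k) n x) / (n : ℝ≥0∞)) atTop)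
        = fun _ => (0 : ℝ≥0∞) := by
      funext k
      have : ∀ f : M → ℝ, supNorm f = 0 := fun f => by simp [supNorm]
      simp [this, Filter.limsup_const]
    rw [hz]
    exact tendsto_const_nhds
  obtain ⟨x₀⟩ := hM
  -- nonnegativity of the constants
  have hCnn : ∀ k : ℕ, 1 ≤ k → 0 ≤ C k := by
    intro k hk
    have h := hWAA k 1 hk le_rfl x₀
    linarith [h.1, h.2]
  -- uniform bounds
  choose D hD using hGbdd
  set Γ : ℕ → ℝ := fun k => ∑ m ∈ Finset.range (3 * k + 1), |D m| with hΓdef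
  have hΓ : ∀ k m, m ≤ 3 * k → ∀ x : M, |G m x| ≤ Γ k := by
    intro k m hm x
    calc |G m x| ≤ D m := hD m x
      _ ≤ |D m| := le_abs_self _
      _ ≤ Γ k := Finset.single_le_sum (fun i _ => abs_nonneg (D i))
          (Finset.mem_range.mpr (by omega))
  have hΓ0 : ∀ k, 0 ≤ Γ k := fun k => Finset.sum_nonneg fun i _ => abs_nonneg _
  set Cm : ℕ → ℝ := fun k => ∑ j ∈ Finset.range k, |C j| with hCmdef
  have hCmle : ∀ k j, j < k → C j ≤ Cm k := fun k j hj =>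
    le_trans (le_abs_self _)
      (Finset.single_le_sum (fun i _ => abs_nonneg (C i)) (Finset.mem_range.mpr hj))
  have hCm0 : ∀ k, 0 ≤ Cm k := fun k => Finset.sum_nonneg fun i _ => abs_nonneg _
  -- the almost-additivity property in absolute-value form
  have habs : ∀ m n : ℕ, 1 ≤ m → 1 ≤ n → ∀ x : M,
      |G (m + n) x - G m x - G n (φ^[m] x)| ≤ C m := by
    intro m n hm hn x
    have h := hWAA m n hm hn x
    rw [abs_le]
    constructor <;> linarith [h.1, h.2]
  -- chain of blocks estimate
  have blocks : ∀ k, 1 ≤ k → ∀ s, 1 ≤ s → ∀ l : ℕ, ∀ y : M,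
      |G (l * k + s) y - (∑ i ∈ Finset.range l, G k (φ^[i * k] y)) - G s (φ^[l * k] y)|
        ≤ l * C k := by
    intro k hk s hs l
    induction l with
    | zero => intro y; simp
    | succ l ih =>
      intro y
      have h1 := habs k (l * k + s) hk (by omega) y
      have h2 := ih (φ^[k] y)
      have e1 : ∑ i ∈ Finset.range (l + 1), G k (φ^[i * k] y)
          = (∑ i ∈ Finset.range l, G k (φ^[i * k] (φ^[k] y))) + G k y := by
        rw [Finset.sum_range_succ' (fun i => G k (φ^[i * k] y)) l]
        congr 1
        · apply Finset.sum_congr rfl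
          intro i _
          have : (i + 1) * k = i * k + k := by ring
          rw [this, Function.iterate_add_apply]
        · simp
      have e2 : φ^[(l + 1) * k] y = φ^[l * k] (φ^[k] y) := by
        have : (l + 1) * k = l * k + k := by ring
        rw [this, Function.iterate_add_apply]
      have e3 : (l + 1) * k + s = k + (l * k + s) := by ring
      have key : G ((l + 1) * k + s) y
            - (∑ i ∈ Finset.range (l + 1), G k (φ^[i * k] y)) - G s (φ^[(l + 1) * k] y)
          = (G (k + (l * k + s)) y - G k y - G (l * k + s) (φ^[k] y))
            + (G (l * k + s) (φ^[k] y)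
              - (∑ i ∈ Finset.range l, G k (φ^[i * k] (φ^[k] y)))
              - G s (φ^[l * k] (φ^[k] y))) := by
        rw [e1, e2, e3]
        ring
      rw [key]
      calc |_| ≤ |G (k + (l * k + s)) y - G k y - G (l * k + s) (φ^[k] y)|
            + |G (l * k + s) (φ^[k] y)
              - (∑ i ∈ Finset.range l, G k (φ^[i * k] (φ^[k] y)))
              - G s (φ^[l * k] (φ^[k] y))| := abs_add_le _ _
        _ ≤ C k + l * C k := add_le_add h1 h2
        _ = (l + 1 : ℕ) * C k := by push_cast; ring
  -- the offset estimate
  have offs : ∀ k, 1 ≤ k → ∀ l s j : ℕ, 1 ≤ s → s ≤ 3 * k → j < k → ∀ n, n = j + (l * k + s) →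
      ∀ x : M,
      |G n x - ∑ i ∈ Finset.range l, G k (φ^[i * k + j] x)|
        ≤ Cm k + l * C k + 2 * Γ k := by
    intro k hk l s j hs1 hs3 hj n hn x
    rcases Nat.eq_zero_or_pos j with hj0 | hj1
    · subst hj0
      have hb := blocks k hk s hs1 l x
      have e4 : ∀ i : ℕ, φ^[i * k + 0] x = φ^[i * k] x := by intro i; rw [Nat.add_zero]
      simp only [e4]
      have hn' : n = l * k + s := by omega
      subst hn'
      have hGs : |G s (φ^[l * k] x)| ≤ Γ k := hΓ k s (by omega) _
      calc |G (l * k + s) x - ∑ i ∈ Finset.range l, G k (φ^[i * k] x)|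
          = |(G (l * k + s) x - (∑ i ∈ Finset.range l, G k (φ^[i * k] x)) - G s (φ^[l * k] x))
            + G s (φ^[l * k] x)| := by congr 1; ring
        _ ≤ |G (l * k + s) x - (∑ i ∈ Finset.range l, G k (φ^[i * k] x)) - G s (φ^[l * k] x)|
            + |G s (φ^[l * k] x)| := abs_add_le _ _
        _ ≤ l * C k + Γ k := add_le_add hb hGs
        _ ≤ Cm k + l * C k + 2 * Γ k := by
            have := hCm0 k
            have := hΓ0 k
            linarith
    · have h1 := habs j (l * k + s) hj1 (by omega) x
      have h2 := blocks k hk s hs1 l (φ^[j] x)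
      have e5 : ∀ i : ℕ, φ^[i * k] (φ^[j] x) = φ^[i * k + j] x := fun i =>
        (Function.iterate_add_apply φ (i * k) j x).symm
      have e6 : φ^[l * k] (φ^[j] x) = φ^[l * k + j] x :=
        (Function.iterate_add_apply φ (l * k) j x).symm
      rw [e6] at h2
      simp only [e5] at h2
      have key : G n x - ∑ i ∈ Finset.range l, G k (φ^[i * k + j] x)
          = (G (j + (l * k + s)) x - G j x - G (l * k + s) (φ^[j] x))
            + (G (l * k + s) (φ^[j] x)
              - (∑ i ∈ Finset.range l, G k (φ^[i * k + j] x)) - G s (φ^[l * k + j] x))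
            + G j x + G s (φ^[l * k + j] x) := by
        rw [← hn]
        ring
      rw [key]
      have hGj : |G j x| ≤ Γ k := hΓ k j (by omega) x
      have hGs : |G s (φ^[l * k + j] x)| ≤ Γ k := hΓ k s (by omega) _
      calc |_| ≤ |(G (j + (l * k + s)) x - G j x - G (l * k + s) (φ^[j] x))
            + (G (l * k + s) (φ^[j] x)
              - (∑ i ∈ Finset.range l, G k (φ^[i * k + j] x)) - G s (φ^[l * k + j] x))
            + G j x| + |G s (φ^[l * k + j] x)| := abs_add_le _ _
        _ ≤ (|(G (j + (l * k + s)) x - G j x - G (l * k + s) (φ^[j] x))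
            + (G (l * k + s) (φ^[j] x)
              - (∑ i ∈ Finset.range l, G k (φ^[i * k + j] x)) - G s (φ^[l * k + j] x))|
            + |G j x|) + |G s (φ^[l * k + j] x)| := by
            gcongr
            exact abs_add_le _ _
        _ ≤ ((|G (j + (l * k + s)) x - G j x - G (l * k + s) (φ^[j] x)|
            + |G (l * k + s) (φ^[j] x)
              - (∑ i ∈ Finset.range l, G k (φ^[i * k + j] x)) - G s (φ^[l * k + j] x)|)
            + |G j x|) + |G s (φ^[l * k + j] x)| := by
            gcongr
            exact abs_add_le _ _
        _ ≤ ((C j + l * C k) + Γ k) + Γ k := by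
            gcongr
        _ ≤ Cm k + l * C k + 2 * Γ k := by
            have := hCmle k j hj
            linarith
  -- the master pointwise estimate
  have master : ∀ k : ℕ, 1 ≤ k → ∀ n : ℕ, 3 * k ≤ n → ∀ x : M,
      |G n x - (k : ℝ)⁻¹ * birkhoff φ (G k) n x|
        ≤ (Cm k + 5 * Γ k) + n * (C k / k) := by
    intro k hk n hn x
    set q := n / k with hq
    set l := q - 2 with hldef
    have hkpos : (0 : ℝ) < k := by exact_mod_cast hk
    have hq3 : 3 ≤ q := by
      rw [hq]
      exact (Nat.le_div_iff_mul_le (by omega)).mpr (by omega)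
    have hdm : q * k + n % k = n := by rw [hq, mul_comm]; exact Nat.div_add_mod n k
    have hmod : n % k < k := Nat.mod_lt n (by omega)
    have hsub : l * k = q * k - 2 * k := by rw [hldef]; exact Nat.sub_mul q 2 k
    have hmul3 : 3 * k ≤ q * k := Nat.mul_le_mul_right k hq3
    have hlkn : l * k ≤ n ∧ n - l * k ≤ 3 * k := by
      constructor <;> omega
    -- sum of offset estimates
    have hsum1 : |(k : ℝ) * G n x
        - ∑ j ∈ Finset.range k, ∑ i ∈ Finset.range l, G k (φ^[i * k + j] x)|
        ≤ k * (Cm k + l * C k + 2 * Γ k) := by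
      have hrw : (k : ℝ) * G n x
          - ∑ j ∈ Finset.range k, ∑ i ∈ Finset.range l, G k (φ^[i * k + j] x)
          = ∑ j ∈ Finset.range k,
            (G n x - ∑ i ∈ Finset.range l, G k (φ^[i * k + j] x)) := by
        rw [Finset.sum_sub_distrib, Finset.sum_const, Finset.card_range, nsmul_eq_mul]
      rw [hrw]
      calc |∑ j ∈ Finset.range k,
            (G n x - ∑ i ∈ Finset.range l, G k (φ^[i * k + j] x))|
          ≤ ∑ j ∈ Finset.range k,
            |G n x - ∑ i ∈ Finset.range l, G k (φ^[i * k + j] x)| :=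
            Finset.abs_sum_le_sum_abs _ _
        _ ≤ ∑ j ∈ Finset.range k, (Cm k + l * C k + 2 * Γ k) := by
            apply Finset.sum_le_sum
            intro j hj
            have hjk := Finset.mem_range.mp hj
            exact offs k hk l (n - j - l * k) j (by omega) (by omega) hjk n (by omega) x
        _ = k * (Cm k + l * C k + 2 * Γ k) := by
            rw [Finset.sum_const, Finset.card_range, nsmul_eq_mul]
    -- reindexing the double sum
    have hre : ∑ j ∈ Finset.range k, ∑ i ∈ Finset.range l, G k (φ^[i * k + j] x)
        = ∑ t ∈ Finset.range (l * k), G k (φ^[t] x) := by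
      rw [sumRangeMulAux (fun t => G k (φ^[t] x)) k l, Finset.sum_comm]
    -- the tail estimate
    have htail : |birkhoff φ (G k) n x - ∑ t ∈ Finset.range (l * k), G k (φ^[t] x)|
        ≤ 3 * k * Γ k := by
      have hsplit : ∑ t ∈ Finset.range n, G k (φ^[t] x)
          = (∑ t ∈ Finset.range (l * k), G k (φ^[t] x))
            + ∑ t ∈ Finset.Ico (l * k) n, G k (φ^[t] x) := by
        rw [Finset.range_eq_Ico, Finset.range_eq_Ico]
        exact (Finset.sum_Ico_consecutive _ (Nat.zero_le (l * k)) hlkn.1).symm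
      rw [birkhoff, hsplit, add_sub_cancel_left]
      calc |∑ t ∈ Finset.Ico (l * k) n, G k (φ^[t] x)|
          ≤ ∑ t ∈ Finset.Ico (l * k) n, |G k (φ^[t] x)| := Finset.abs_sum_le_sum_abs _ _
        _ ≤ ∑ t ∈ Finset.Ico (l * k) n, Γ k :=
            Finset.sum_le_sum fun t _ => hΓ k k (by omega) _
        _ = ((n - l * k : ℕ) : ℝ) * Γ k := by
            rw [Finset.sum_const, Nat.card_Ico, nsmul_eq_mul]
        _ ≤ 3 * k * Γ k := by
            have h1 : ((n - l * k : ℕ) : ℝ) ≤ 3 * k := by exact_mod_cast hlkn.2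
            exact mul_le_mul_of_nonneg_right h1 (hΓ0 k)
    -- combine
    have hcomb : |(k : ℝ) * G n x - birkhoff φ (G k) n x|
        ≤ k * (Cm k + l * C k + 2 * Γ k) + 3 * k * Γ k := by
      have : (k : ℝ) * G n x - birkhoff φ (G k) n x
          = ((k : ℝ) * G n x
              - ∑ j ∈ Finset.range k, ∑ i ∈ Finset.range l, G k (φ^[i * k + j] x))
            - (birkhoff φ (G k) n x - ∑ t ∈ Finset.range (l * k), G k (φ^[t] x)) := by
        rw [hre]; ring
      rw [this]
      exact (abs_sub _ _).trans (add_le_add hsum1 htail)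
    have hfin : G n x - (k : ℝ)⁻¹ * birkhoff φ (G k) n x
        = (k : ℝ)⁻¹ * ((k : ℝ) * G n x - birkhoff φ (G k) n x) := by
      field_simp
    rw [hfin, abs_mul, abs_inv, abs_of_pos hkpos]
    have hlCk : (l : ℝ) * C k ≤ (n : ℝ) * (C k / k) := by
      have h1 : (l : ℝ) ≤ (n : ℝ) / k := by
        rw [le_div_iff₀ hkpos]
        exact_mod_cast hlkn.1
      calc (l : ℝ) * C k ≤ ((n : ℝ) / k) * C k :=
          mul_le_mul_of_nonneg_right h1 (hCnn k hk)
        _ = (n : ℝ) * (C k / k) := by ring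
    calc (k : ℝ)⁻¹ * |(k : ℝ) * G n x - birkhoff φ (G k) n x|
        ≤ (k : ℝ)⁻¹ * (k * (Cm k + l * C k + 2 * Γ k) + 3 * k * Γ k) := by
          exact mul_le_mul_of_nonneg_left hcomb (by positivity)
      _ = Cm k + 5 * Γ k + (l : ℝ) * C k := by field_simp; ring
      _ ≤ (Cm k + 5 * Γ k) + n * (C k / k) := by linarith
  -- limsup estimate for each k ≥ 1
  have key : ∀ k : ℕ, 1 ≤ k →
      Filter.limsup (fun n : ℕ =>
        supNorm (fun x => G n x - (k : ℝ)⁻¹ * birkhoff φ (G k) n x) / (n : ℝ≥0∞)) atTop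
      ≤ ENNReal.ofReal (C k / k) := by
    intro k hk
    set B := Cm k + 5 * Γ k with hB
    have hB0 : 0 ≤ B := by
      have := hCm0 k; have := hΓ0 k; rw [hB]; linarith
    have hkpos : (0 : ℝ) < k := by exact_mod_cast hk
    have hc0 : 0 ≤ C k / k := div_nonneg (hCnn k hk) (le_of_lt hkpos)
    have hEv : ∀ᶠ n : ℕ in atTop,
        supNorm (fun x => G n x - (k : ℝ)⁻¹ * birkhoff φ (G k) n x) / (n : ℝ≥0∞)
          ≤ ENNReal.ofReal B / (n : ℝ≥0∞) + ENNReal.ofReal (C k / k) := by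
      filter_upwards [eventually_ge_atTop (3 * k), eventually_ge_atTop 1] with n hn hn1
      have hne : (n : ℝ≥0∞) ≠ 0 := by
        simp only [ne_eq, Nat.cast_eq_zero]; omega
      have hnt : (n : ℝ≥0∞) ≠ ⊤ := ENNReal.natCast_ne_top n
      have hs : supNorm (fun x => G n x - (k : ℝ)⁻¹ * birkhoff φ (G k) n x)
          ≤ ENNReal.ofReal (B + n * (C k / k)) :=
        iSup_le fun x => ENNReal.ofReal_le_ofReal (master k hk n hn x)
      calc supNorm (fun x => G n x - (k : ℝ)⁻¹ * birkhoff φ (G k) n x) / (n : ℝ≥0∞)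
          ≤ ENNReal.ofReal (B + n * (C k / k)) / (n : ℝ≥0∞) :=
            ENNReal.div_le_div_right hs _
        _ = (ENNReal.ofReal B + (n : ℝ≥0∞) * ENNReal.ofReal (C k / k)) / (n : ℝ≥0∞) := by
            rw [ENNReal.ofReal_add hB0 (by positivity),
              ENNReal.ofReal_mul (by positivity : (0:ℝ) ≤ (n : ℝ)), ENNReal.ofReal_natCast]
        _ = ENNReal.ofReal B / (n : ℝ≥0∞) + ENNReal.ofReal (C k / k) := by
            rw [ENNReal.add_div]
            congr 1
            rw [div_eq_mul_inv, mul_comm (n : ℝ≥0∞), mul_assoc,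
              ENNReal.mul_inv_cancel hne hnt, mul_one]
    have hg : Tendsto (fun n : ℕ => ENNReal.ofReal B / (n : ℝ≥0∞) + ENNReal.ofReal (C k / k))
        atTop (nhds (ENNReal.ofReal (C k / k))) := by
      have h1 : Tendsto (fun n : ℕ => ENNReal.ofReal B / (n : ℝ≥0∞)) atTop (nhds 0) := by
        simp only [div_eq_mul_inv]
        have := ENNReal.Tendsto.const_mul (a := ENNReal.ofReal B)
          ENNReal.tendsto_inv_nat_nhds_zero (Or.inr ENNReal.ofReal_ne_top)
        simpa using this
      simpa using h1.add tendsto_const_nhds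
    calc Filter.limsup (fun n : ℕ =>
          supNorm (fun x => G n x - (k : ℝ)⁻¹ * birkhoff φ (G k) n x) / (n : ℝ≥0∞)) atTop
        ≤ Filter.limsup (fun n : ℕ =>
          ENNReal.ofReal B / (n : ℝ≥0∞) + ENNReal.ofReal (C k / k)) atTop :=
          Filter.limsup_le_limsup hEv
      _ = ENNReal.ofReal (C k / k) := hg.limsup_eq
  -- final squeeze
  have hR : Tendsto (fun k : ℕ => ENNReal.ofReal (C k / k)) atTop (nhds 0) := by
    have := ENNReal.tendsto_ofReal hC
    simpa using this
  refine tendsto_of_tendsto_of_tendsto_of_le_of_le' tendsto_const_nhds hR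
    (Eventually.of_forall fun k => zero_le) ?_
  filter_upwards [eventually_ge_atTop 1] with k hk
  exact key k hk
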